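/- Let R be a local commutative ring. Then R is SG-semisimple if and only if R has at most one nonzero proper ideal, i.e., there is at most one ideal I of R with I ≠ 0 and I ≠ R. -/

import Mathlib

open CategoryTheory

universe u

/-- `Extⁿ_R(M, N) = 0`, using Mathlib's `Ext` functor on `ModuleCat R`. -/
def extVanishes (R : Type u) [CommRing R] (n : ℕ) (M N : Type u) [AddCommGroup M] [Module R M]
    [AddCommGroup N] [Module R N] : Prop :=
  Subsingleton (((Ext R (ModuleCat.{u} R) n).obj (Opposite.op (ModuleCat.of R M))).obj
    (ModuleCat.of R N))

/-- An `R`-module `M` is strongly Gorenstein projective if there is a short exact sequence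
`0 → M → P → M → 0` with `P` projective, and `Ext¹_R(M, Q) = 0` for every projective `Q`. -/
def IsStronglyGorensteinProjective (R : Type u) [CommRing R] (M : Type u) [AddCommGroup M]
    [Module R M] : Prop :=
  (∃ (P : ModuleCat.{u} R) (f : M →ₗ[R] P) (g : P →ₗ[R] M),
      Module.Projective R P ∧ Function.Injective f ∧ Function.Surjective g ∧
      LinearMap.range f = LinearMap.ker g) ∧
  ∀ Q : ModuleCat.{u} R, Module.Projective R Q → extVanishes R 1 M Q

/-- An `R`-module is Gorenstein projective if it is a direct summand of a strongly Gorenstein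
projective module. -/
def IsGorensteinProjective (R : Type u) [CommRing R] (M : Type u) [AddCommGroup M]
    [Module R M] : Prop :=
  ∃ (N : ModuleCat.{u} R) (i : M →ₗ[R] N) (r : N →ₗ[R] M),
    IsStronglyGorensteinProjective R N ∧ r ∘ₗ i = LinearMap.id

/-- An `R`-module `M` is strongly Gorenstein injective if there is a short exact sequence
`0 → M → E → M → 0` with `E` injective, and `Ext¹_R(Q, M) = 0` for every injective `Q`. -/
def IsStronglyGorensteinInjective (R : Type u) [CommRing R] (M : Type u) [AddCommGroup M]
    [Module R M] : Prop :=
  (∃ (E : ModuleCat.{u} R) (f : M →ₗ[R] E) (g : E →ₗ[R] M),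
      Module.Injective R E ∧ Function.Injective f ∧ Function.Surjective g ∧
      LinearMap.range f = LinearMap.ker g) ∧
  ∀ Q : ModuleCat.{u} R, Module.Injective R Q → extVanishes R 1 Q M

/-- An `R`-module is Gorenstein injective if it is a direct summand of a strongly Gorenstein
injective module. -/
def IsGorensteinInjective (R : Type u) [CommRing R] (M : Type u) [AddCommGroup M]
    [Module R M] : Prop :=
  ∃ (N : ModuleCat.{u} R) (i : M →ₗ[R] N) (r : N →ₗ[R] M),
    IsStronglyGorensteinInjective R N ∧ r ∘ₗ i = LinearMap.id

/-- A ring is G-semisimple if every module over it is Gorenstein projective. -/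
def GSemisimple (R : Type u) [CommRing R] : Prop :=
  ∀ M : ModuleCat.{u} R, IsGorensteinProjective R M

/-- A ring is SG-semisimple if every module over it is strongly Gorenstein projective. -/
def SGSemisimple (R : Type u) [CommRing R] : Prop :=
  ∀ M : ModuleCat.{u} R, IsStronglyGorensteinProjective R M

section AuxiliaryLemmas

variable {R : Type u} [CommRing R]

open scoped Classical in
/-- A partial inverse to multiplication by `x`. -/
noncomputable def xinv (x r : R) : R :=
  if h : ∃ c, c * x = r then (if r = 0 then 0 else h.choose) else 0

lemma xinv_zero (x : R) : xinv x 0 = 0 := by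
  unfold xinv; split <;> simp

lemma xinv_spec {x r : R} (h : r ∈ Ideal.span {x}) : (xinv x r) * x = r := by
  obtain ⟨c, hc⟩ := Ideal.mem_span_singleton'.1 h
  unfold xinv
  rw [dif_pos ⟨c, hc⟩]
  by_cases h0 : r = 0
  · simp [h0]
  · rw [if_neg h0]
    exact (⟨c, hc⟩ : ∃ c, c * x = r).choose_spec

open scoped Classical in
/-- A set-theoretic section of the quotient map sending `0` to `0`. -/
noncomputable def qsec (m : Ideal R) (c : R ⧸ m) : R :=
  if c = 0 then 0 else (Ideal.Quotient.mk_surjective c).choose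

lemma qsec_zero (m : Ideal R) : qsec m 0 = 0 := by simp [qsec]

lemma qsec_spec (m : Ideal R) (c : R ⧸ m) : Ideal.Quotient.mk m (qsec m c) = c := by
  unfold qsec
  by_cases h0 : c = 0
  · simp [h0]
  · rw [if_neg h0]
    exact (Ideal.Quotient.mk_surjective c).choose_spec

lemma subsingleton_of_isZero {A : ModuleCat.{u} R} (h : Limits.IsZero A) : Subsingleton A := by
  have h1 : (𝟙 A) = 0 := h.eq_of_src _ _
  refine ⟨fun a b => ?_⟩
  have : ∀ x : A, x = 0 := fun x => by
    have := congrArg (fun f => (f : A ⟶ A) x) h1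
    simpa using this
  rw [this a, this b]

/-- `Ext¹(M, Q) = 0` when `Q` is an injective module. -/
lemma extVanishes_one_of_injective (M Q : Type u) [AddCommGroup M] [Module R M]
    [AddCommGroup Q] [Module R Q] (hQ : Module.Injective R Q) : extVanishes R 1 M Q := by
  set X := ModuleCat.of R M
  set Y := ModuleCat.of R Q
  have P : ProjectiveResolution X := ProjectiveResolution.of X
  set K := P.complex.linearYonedaObj R Y with hK
  have hres : LinearMap.range (P.complex.d 2 1).hom = LinearMap.ker (P.complex.d 1 0).hom := by
    have := P.complex_exactAt_succ 0
    rw [P.complex.exactAt_iff' 2 1 0 (by simp) (by simp),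
      ShortComplex.moduleCat_exact_iff_range_eq_ker] at this
    exact this
  have key : ∀ φ : (P.complex.X 1 ⟶ Y), P.complex.d 2 1 ≫ φ = 0 →
      ∃ ψ : (P.complex.X 0 ⟶ Y), P.complex.d 1 0 ≫ ψ = φ := by
    intro φ hφ
    set d10 : (P.complex.X 1 : Type u) →ₗ[R] P.complex.X 0 := (P.complex.d 1 0).hom
    have hker : LinearMap.ker d10 ≤ LinearMap.ker (φ.hom : (P.complex.X 1 : Type u) →ₗ[R] Q) := by
      rw [← hres]
      rintro _ ⟨z, rfl⟩
      have := congrArg (fun f => (f : P.complex.X 2 ⟶ Y).hom z) hφ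
      simpa using this
    set φ' : ((P.complex.X 1 : Type u) ⧸ LinearMap.ker d10) →ₗ[R] Q :=
      (LinearMap.ker d10).liftQ φ.hom hker
    set ι : ((P.complex.X 1 : Type u) ⧸ LinearMap.ker d10) →ₗ[R] P.complex.X 0 :=
      (LinearMap.ker d10).liftQ d10 le_rfl
    have hι : Function.Injective ι := by
      rw [← LinearMap.ker_eq_bot]
      exact Submodule.ker_liftQ_eq_bot _ _ _ le_rfl
    obtain ⟨ψ, hψ⟩ := hQ.out ι hι φ'
    refine ⟨ModuleCat.ofHom ψ, ?_⟩
    ext z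
    show ψ (d10 z) = φ z
    have h1 : d10 z = ι (Submodule.Quotient.mk z) := rfl
    rw [h1, hψ]
    rfl
  have hex : K.ExactAt 1 := by
    rw [K.exactAt_iff' 0 1 2 (by simp) (by simp), ShortComplex.moduleCat_exact_iff]
    intro (φ : K.X 1) hφ
    obtain ⟨ψ, hψ⟩ := key φ hφ
    exact ⟨ψ, hψ⟩
  have hzero : Limits.IsZero (K.homology 1) :=
    (K.exactAt_iff_isZero_homology 1).1 hex
  exact subsingleton_of_isZero ((Limits.IsZero.of_iso hzero (P.isoExt 1 Y)))

/-- If all ideals of `R` are `⊥` or `⊤`, then every `R`-module is injective. -/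
lemma injective_all_of_ideals_bot_top (htri : ∀ I : Ideal R, I = ⊥ ∨ I = ⊤)
    (Q : Type u) [AddCommGroup Q] [Module R Q] : Module.Injective R Q := by
  refine Module.Baer.injective ?_
  intro I φ
  rcases htri I with hI | hI
  · subst hI
    refine ⟨0, fun y hy => ?_⟩
    have : (⟨y, hy⟩ : ↥(⊥ : Ideal R)) = 0 := Subtype.ext (by simpa using hy)
    rw [this, map_zero, LinearMap.zero_apply]
  · subst hI
    exact ⟨φ.comp (LinearMap.codRestrict _ LinearMap.id (fun r => trivial)), fun y hy => rfl⟩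

lemma range_prodMap' {A B C D : Type u} [AddCommGroup A] [Module R A] [AddCommGroup B] [Module R B]
    [AddCommGroup C] [Module R C] [AddCommGroup D] [Module R D]
    (f : A →ₗ[R] B) (g : C →ₗ[R] D) :
    LinearMap.range (f.prodMap g) = (LinearMap.range f).prod (LinearMap.range g) := by
  ext ⟨b, d⟩
  constructor
  · rintro ⟨⟨a, c⟩, h⟩
    rw [Prod.ext_iff] at h
    exact ⟨⟨a, h.1⟩, ⟨c, h.2⟩⟩
  · rintro ⟨⟨a, ha⟩, ⟨c, hc⟩⟩
    exact ⟨(a, c), by simp [LinearMap.prodMap_apply, ha, hc]⟩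

end AuxiliaryLemmas

section LocalRingLemmas

variable {R : Type u} [CommRing R]

lemma forward_key {R : Type u} [CommRing R] (m : Ideal R) [hmax : m.IsMaximal]
    (P : ModuleCat.{u} R) (f : (R ⧸ m) →ₗ[R] P)
    (g : P →ₗ[R] (R ⧸ m)) (hP : Module.Projective R P) [IsLocalRing R]
    (hf : Function.Injective f) (hg : Function.Surjective g)
    (hfg : LinearMap.range f = LinearMap.ker g) :
    m = ⊥ ∨ IsAtom m := by
  have hsimpk : IsSimpleModule R (R ⧸ m) :=
    isSimpleModule_iff_isCoatom.2 (Ideal.isMaximal_def.1 hmax)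
  have e : (R ⧸ m) ≃ₗ[R] LinearMap.ker g :=
    (LinearEquiv.ofInjective f hf).trans (LinearEquiv.ofEq _ _ hfg)
  haveI hsimpS : IsSimpleModule R (LinearMap.ker g) := IsSimpleModule.congr e.symm
  have hatomS : IsAtom (LinearMap.ker g) := isSimpleModule_iff_isAtom.1 hsimpS
  haveI : Nontrivial (R ⧸ m) := Ideal.Quotient.nontrivial_iff.mpr hmax.ne_top
  -- P is finitely generated
  obtain ⟨p₀, hp₀⟩ := hg 1
  haveI : Module.Finite R P := by
    refine ⟨Submodule.fg_def.2 ⟨{p₀, f 1}, Set.toFinite _, ?_⟩⟩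
    rw [eq_top_iff]
    intro p _
    obtain ⟨r, hr⟩ := Ideal.Quotient.mk_surjective (g p)
    have hsm : ∀ s : R, s • (1 : R ⧸ m) = Ideal.Quotient.mk m s := by
      intro s
      show s • Submodule.Quotient.mk (1 : R) = Submodule.Quotient.mk s
      rw [← Submodule.Quotient.mk_smul, smul_eq_mul, mul_one]
    have h1 : g (p - r • p₀) = 0 := by
      rw [map_sub, map_smul, hp₀, hsm, hr, sub_self]
    have h2 : p - r • p₀ ∈ LinearMap.range f := by rw [hfg]; exact h1
    obtain ⟨y, hy⟩ := h2
    obtain ⟨s, hs⟩ := Ideal.Quotient.mk_surjective y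
    have h3 : p = r • p₀ + s • f 1 := by
      rw [← map_smul, hsm, hs, hy]; abel
    rw [h3]
    exact Submodule.add_mem _
      (Submodule.smul_mem _ _ (Submodule.subset_span (by simp)))
      (Submodule.smul_mem _ _ (Submodule.subset_span (by simp)))
  haveI : Module.Projective R P := hP
  haveI : Module.Flat R P := Module.Flat.of_projective
  haveI : Module.FinitePresentation R P := Module.finitePresentation_of_projective R P
  haveI : Module.Free R P := Module.free_of_flat_of_isLocalRing
  set ι := Module.Free.ChooseBasisIndex R P with hι
  set b : Module.Basis ι R P := Module.Free.chooseBasis R P with hb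
  have hS0 : LinearMap.ker g ≠ ⊥ := by
    intro h0
    have e' := e.trans (LinearEquiv.ofEq _ _ h0)
    exact one_ne_zero (e'.injective (Subsingleton.elim _ _))
  have hcancel : ∀ (a : R) (i : ι), a • b i = 0 → a = 0 := by
    intro a i hai
    have h1 : b.repr (a • b i) = a • Finsupp.single i 1 := by
      rw [map_smul, b.repr_self]
    rw [hai, map_zero] at h1
    have h2 := congrArg (fun v => v i) h1
    simpa using h2.symm
  have hιne : Nonempty ι := by
    by_contra hempty
    rw [not_nonempty_iff] at hempty
    apply hS0
    rw [eq_bot_iff]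
    rintro s hs2
    have h4 : b.repr s = 0 := Subsingleton.elim _ _
    have hs0 : s = 0 := by
      have := congrArg b.repr.symm h4
      simpa using this
    simp [hs0]
  obtain ⟨i₀⟩ := hιne
  have hmP : m • (⊤ : Submodule R P) ≤ LinearMap.ker g := by
    refine Submodule.smul_le.2 (fun a ha p _ => ?_)
    show g (a • p) = 0
    rw [map_smul]
    obtain ⟨s, hs⟩ := Ideal.Quotient.mk_surjective (g p)
    rw [← hs]
    show a • Submodule.Quotient.mk s = 0
    rw [← Submodule.Quotient.mk_smul]
    exact (Submodule.Quotient.mk_eq_zero _).2 (Ideal.mul_mem_right _ _ ha)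
  rcases hatomS.le_iff.1 hmP with h0 | hMPS
  · left
    rw [eq_bot_iff]
    intro a ha
    have h1 : a • b i₀ ∈ m • (⊤ : Submodule R P) :=
      Submodule.smul_mem_smul ha trivial
    rw [h0] at h1
    have := hcancel a i₀ (by simpa using h1)
    simpa using this
  · right
    have hmne : m ≠ ⊥ := by
      intro h0
      apply hS0
      rw [← hMPS, h0, Submodule.bot_smul]
    set αl : ↥m →ₗ[R] P := (LinearMap.toSpanSingleton R P (b i₀)).comp m.subtype with hαl
    have happ : ∀ x : ↥m, αl x = (x : R) • b i₀ := fun x => rfl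
    have hinj : Function.Injective αl := by
      intro x y hxy
      have h1 : ((x : R) - y) • b i₀ = 0 := by
        rw [sub_smul, sub_eq_zero, ← happ, ← happ]; exact hxy
      exact Subtype.ext (sub_eq_zero.1 (hcancel _ _ h1))
    have hrange : LinearMap.range αl = LinearMap.ker g := by
      have h1 : LinearMap.range αl ≤ LinearMap.ker g := by
        rw [← hMPS]
        rintro _ ⟨⟨a, ha⟩, rfl⟩
        exact Submodule.smul_mem_smul ha trivial
      have h2 : LinearMap.range αl ≠ ⊥ := by
        intro h0
        obtain ⟨a, ha, hane⟩ := Submodule.exists_mem_ne_zero_of_ne_bot hmne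
        have h3 : αl ⟨a, ha⟩ = 0 := by
          rw [← Submodule.mem_bot (R := R), ← h0]
          exact ⟨_, rfl⟩
        rw [happ] at h3
        exact hane (hcancel a i₀ h3)
      exact (hatomS.le_iff.1 h1).resolve_left h2
    have e2 : ↥m ≃ₗ[R] ↥(LinearMap.ker g) :=
      (LinearEquiv.ofInjective αl hinj).trans (LinearEquiv.ofEq _ _ hrange)
    haveI : IsSimpleModule R ↥m := IsSimpleModule.congr e2
    exact isSimpleModule_iff_isAtom.1 this


section
variable [IsLocalRing R]

lemma ring_facts (hm : IsLocalRing.maximalIdeal R ≠ ⊥)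
    (htri : ∀ I : Ideal R, I ≠ ⊥ → I ≠ ⊤ → I = IsLocalRing.maximalIdeal R) :
    ∃ x : R, x ≠ 0 ∧ Ideal.span {x} = IsLocalRing.maximalIdeal R ∧
      (∀ r : R, r * x = 0 ↔ r ∈ IsLocalRing.maximalIdeal R) := by
  obtain ⟨x, hxm, hx0⟩ := Submodule.exists_mem_ne_zero_of_ne_bot hm
  have hspan : Ideal.span {x} = IsLocalRing.maximalIdeal R := by
    refine htri _ (by simpa [Ideal.span_singleton_eq_bot] using hx0) (fun htop => ?_)
    exact (IsLocalRing.maximalIdeal.isMaximal R).ne_top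
      (top_le_iff.1 (htop ▸ ((Ideal.span_singleton_le_iff_mem _).2 hxm)))
  have hxx : x * x = 0 := by
    by_contra hxx
    have hspan2 : Ideal.span {x * x} = IsLocalRing.maximalIdeal R := by
      refine htri _ (by simpa [Ideal.span_singleton_eq_bot] using hxx) (fun htop => ?_)
      exact (IsLocalRing.maximalIdeal.isMaximal R).ne_top
        (top_le_iff.1 (htop ▸ ((Ideal.span_singleton_le_iff_mem _).2
          (Ideal.mul_mem_left _ _ hxm))))
    have hx_mem : x ∈ Ideal.span {x * x} := by
      rw [hspan2, ← hspan]; exact Ideal.mem_span_singleton_self x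
    obtain ⟨a, ha⟩ := Ideal.mem_span_singleton'.1 hx_mem
    have hunit : IsUnit (1 - a * x) := by
      by_contra hnu
      have h1 : (1 : R) - a * x ∈ IsLocalRing.maximalIdeal R :=
        (IsLocalRing.mem_maximalIdeal _).2 (mem_nonunits_iff.2 hnu)
      have h2 : a * x ∈ IsLocalRing.maximalIdeal R := Ideal.mul_mem_left _ _ hxm
      have h3 : (1 : R) ∈ IsLocalRing.maximalIdeal R := by
        have := Ideal.add_mem _ h1 h2; simpa using this
      exact (IsLocalRing.maximalIdeal.isMaximal R).ne_top ((Ideal.eq_top_iff_one _).2 h3)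
    apply hx0
    have hxu : (1 - a * x) * x = (1 - a * x) * 0 := by
      have h4 : (1 - a * x) * x = x - a * (x * x) := by ring
      rw [h4, ha, sub_self, mul_zero]
    exact hunit.mul_left_cancel hxu
  refine ⟨x, hx0, hspan, fun r => ⟨fun hr => ?_, fun hr => ?_⟩⟩
  · by_contra hrm
    have hru : IsUnit r := by
      by_contra hnu
      exact hrm ((IsLocalRing.mem_maximalIdeal _).2 (mem_nonunits_iff.2 hnu))
    exact hx0 (hru.mul_left_cancel (by rw [hr, mul_zero]))
  · rw [← hspan] at hr
    obtain ⟨c, hc⟩ := Ideal.mem_span_singleton'.1 hr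
    rw [← hc, mul_assoc, hxx, mul_zero]


/-- Over our special ring, every element of a projective module annihilated by x is
divisible by x. -/
lemma divisible_of_ann {x : R} (hx0 : x ≠ 0)
    (hspan : Ideal.span {x} = IsLocalRing.maximalIdeal R)
    (hann : ∀ r : R, r * x = 0 ↔ r ∈ IsLocalRing.maximalIdeal R)
    (Q : Type u) [AddCommGroup Q] [Module R Q] (hQ : Module.Projective R Q)
    (q : Q) (hq : x • q = 0) : ∃ q' : Q, x • q' = q := by
  obtain ⟨s, hs⟩ := Module.projective_def.1 hQ
  set v : Q →₀ R := s q with hv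
  have hvj : ∀ j, v j ∈ Ideal.span {x} := by
    intro j
    have h1 : x • v = 0 := by rw [hv, ← map_smul, hq, map_zero]
    have h2 : x * v j = 0 := by
      have := congrArg (fun w => w j) h1
      simpa using this
    rw [hspan, ← hann]
    rw [mul_comm] at h2
    exact h2
  set w : Q →₀ R := v.mapRange (xinv x) (xinv_zero x) with hw
  have hxw : x • w = v := by
    ext j
    rw [Finsupp.smul_apply, hw, Finsupp.mapRange_apply, smul_eq_mul, mul_comm]
    exact xinv_spec (hvj j)
  refine ⟨Finsupp.linearCombination R id w, ?_⟩
  rw [← map_smul, hxw, hv, hs]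

lemma injective_of_projective {x : R} (hx0 : x ≠ 0)
    (hspan : Ideal.span {x} = IsLocalRing.maximalIdeal R)
    (hann : ∀ r : R, r * x = 0 ↔ r ∈ IsLocalRing.maximalIdeal R)
    (htri : ∀ I : Ideal R, I = ⊥ ∨ I = ⊤ ∨ I = IsLocalRing.maximalIdeal R)
    (Q : Type u) [AddCommGroup Q] [Module R Q] (hQ : Module.Projective R Q) :
    Module.Injective R Q := by
  refine Module.Baer.injective ?_
  intro I φ
  rcases htri I with hI | hI | hI
  · subst hI
    refine ⟨0, fun y hy => ?_⟩
    have : (⟨y, hy⟩ : ↥(⊥ : Ideal R)) = 0 := Subtype.ext (by simpa using hy)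
    rw [this, map_zero, LinearMap.zero_apply]
  · subst hI
    refine ⟨φ.comp (LinearMap.codRestrict _ LinearMap.id (fun r => trivial)), fun y hy => rfl⟩
  · subst hI
    have hxI : x ∈ (IsLocalRing.maximalIdeal R : Ideal R) := by
      rw [← hspan]; exact Ideal.mem_span_singleton_self x
    set q : Q := φ ⟨x, hxI⟩ with hqdef
    have hq : x • q = 0 := by
      have h1 : x • (⟨x, hxI⟩ : ↥(IsLocalRing.maximalIdeal R)) = 0 := by
        apply Subtype.ext
        show x • x = 0
        rw [smul_eq_mul]
        exact (hann x).2 hxI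
      rw [hqdef, ← map_smul, h1, map_zero]
    obtain ⟨q', hq'⟩ := divisible_of_ann hx0 hspan hann Q hQ q hq
    refine ⟨LinearMap.toSpanSingleton R Q q', fun y hy => ?_⟩
    rw [← hspan] at hy
    obtain ⟨c, hc⟩ := Ideal.mem_span_singleton'.1 hy
    have h4 : (⟨y, by rw [hspan] at hy; exact hy⟩ : ↥(IsLocalRing.maximalIdeal R))
        = c • ⟨x, hxI⟩ := Subtype.ext (by simp [← hc, smul_eq_mul])
    calc LinearMap.toSpanSingleton R Q q' y = y • q' := rfl
    _ = (c * x) • q' := by rw [← hc]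
    _ = c • (x • q') := by rw [mul_smul]
    _ = c • q := by rw [hq']
    _ = φ (c • ⟨x, hxI⟩) := by rw [map_smul]
    _ = φ ⟨y, _⟩ := by rw [← h4]

end

set_option maxHeartbeats 1000000 in
lemma decomposition (m : Ideal R) [hmax : m.IsMaximal] {x : R}
    (hspan : Ideal.span {x} = m)
    (hann : ∀ r : R, r * x = 0 ↔ r ∈ m)
    (M : Type u) [AddCommGroup M] [Module R M] :
    ∃ (ι τ : Type u), Nonempty (((ι →₀ R) × (τ →₀ R ⧸ m)) ≃ₗ[R] M) := by
  have hxm : x ∈ m := hspan ▸ Ideal.mem_span_singleton_self x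
  have hxx : x * x = 0 := (hann x).2 hxm
  letI : Field (R ⧸ m) := Ideal.Quotient.field m
  set A : Submodule R M := LinearMap.ker (LinearMap.lsmul R M x) with hA
  set W : Submodule R M := LinearMap.range (LinearMap.lsmul R M x) with hW
  have hWA : W ≤ A := by
    rintro _ ⟨mm, rfl⟩
    show x • ((LinearMap.lsmul R M x) mm) = 0
    show x • (x • mm) = 0
    rw [smul_smul, hxx, zero_smul]
  have hmemA : ∀ a : ↥A, x • (a : M) = 0 := fun a => a.2
  have htor : Module.IsTorsionBySet R ↥A (m : Set R) := by
    intro a r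
    have hr : (r : R) ∈ Ideal.span {x} := by rw [hspan]; exact r.2
    obtain ⟨c, hc⟩ := Ideal.mem_span_singleton'.1 hr
    apply Subtype.ext
    show (r : R) • (a : M) = 0
    rw [← hc, mul_smul, hmemA a, smul_zero]
  letI instkA : Module (R ⧸ m) ↥A := htor.module
  haveI insttower : IsScalarTower R (R ⧸ m) ↥A := htor.isScalarTower
  -- W as a subspace of A
  set WA : Submodule R ↥A := Submodule.comap A.subtype W with hWA2
  set Wk : Submodule (R ⧸ m) ↥A :=
    { carrier := (WA : Set ↥A)
      add_mem' := fun h1 h2 => WA.add_mem h1 h2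
      zero_mem' := WA.zero_mem
      smul_mem' := by
        intro c a ha
        obtain ⟨s, rfl⟩ := Ideal.Quotient.mk_surjective c
        show Ideal.Quotient.mk m s • a ∈ (WA : Set ↥A)
        rw [htor.mk_smul]
        exact WA.smul_mem s ha } with hWk
  obtain ⟨Ck, hCk⟩ := Submodule.exists_isCompl Wk
  set ι := Module.Basis.ofVectorSpaceIndex (R ⧸ m) ↥Wk with hι
  set bW : Module.Basis ι (R ⧸ m) ↥Wk := Module.Basis.ofVectorSpace (R ⧸ m) ↥Wk with hbW
  set τ := Module.Basis.ofVectorSpaceIndex (R ⧸ m) ↥Ck with hτ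
  set bC : Module.Basis τ (R ⧸ m) ↥Ck := Module.Basis.ofVectorSpace (R ⧸ m) ↥Ck with hbC
  refine ⟨ι, τ, ?_⟩
  -- lifts of the basis of W
  have hbWmem : ∀ i : ι, ((bW i : ↥A) : M) ∈ W := fun i => (bW i).2
  have hmi : ∀ i : ι, ∃ mi : M, x • mi = ((bW i : ↥A) : M) := fun i => hbWmem i
  set mi : ι → M := fun i => (hmi i).choose with hmi2
  have hmi3 : ∀ i, x • mi i = ((bW i : ↥A) : M) := fun i => (hmi i).choose_spec
  -- the maps
  set Φfree : (ι →₀ R) →ₗ[R] M := Finsupp.linearCombination R mi with hΦfree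
  set ΨWk : (ι →₀ (R ⧸ m)) →ₗ[R ⧸ m] ↥A :=
    Wk.subtype.comp (Finsupp.linearCombination (R ⧸ m) (fun i => bW i)) with hΨWk
  set ΨW : (ι →₀ (R ⧸ m)) →ₗ[R] M :=
    A.subtype.comp (ΨWk.restrictScalars R) with hΨW
  set ΦCk : (τ →₀ (R ⧸ m)) →ₗ[R ⧸ m] ↥A :=
    Ck.subtype.comp (bC.repr.symm : (τ →₀ (R ⧸ m)) ≃ₗ[R ⧸ m] ↥Ck).toLinearMap with hΦCk
  set ΦC : (τ →₀ (R ⧸ m)) →ₗ[R] M := A.subtype.comp (ΦCk.restrictScalars R) with hΦC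
  set Φ : ((ι →₀ R) × (τ →₀ (R ⧸ m))) →ₗ[R] M := Φfree.coprod ΦC with hΦ
  -- key identity
  have L1 : ∀ v : ι →₀ R, x • Φfree v = ΨW (v.mapRange (Ideal.Quotient.mk m) (map_zero _)) := by
    intro v
    have := congrArg (fun (f : (ι →₀ R) →ₗ[R] M) => f v)
      (Finsupp.lhom_ext (M := R) (N := M)
        (φ := (LinearMap.lsmul R M x).comp Φfree)
        (ψ := ΨW.comp (Finsupp.mapRange.linearMap (m.mkQ)))
        (fun i b => ?_))
    · simp at this; exact this
    · show x • Φfree (Finsupp.single i b) =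
        ΨW ((Finsupp.mapRange.linearMap (m.mkQ)) (Finsupp.single i b))
      rw [hΦfree]
      rw [Finsupp.linearCombination_single]
      rw [Finsupp.mapRange.linearMap_apply]
      rw [Finsupp.mapRange_single]
      have h1 : ΨW (Finsupp.single i (m.mkQ b)) =
          ((Wk.subtype ((Finsupp.linearCombination (R ⧸ m) (fun i => bW i))
            (Finsupp.single i (m.mkQ b))) : ↥A) : M) := rfl
      rw [h1, Finsupp.linearCombination_single]
      have h2 : (m.mkQ b) • (bW i) = (Ideal.Quotient.mk m b) • bW i := rfl
      rw [h2]
      have h3 : (Wk.subtype ((Ideal.Quotient.mk m b) • bW i) : ↥A)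
          = (Ideal.Quotient.mk m b) • (bW i : ↥A) := rfl
      rw [h3]
      rw [htor.mk_smul]
      have h4 : ((b • (bW i : ↥A) : ↥A) : M) = b • ((bW i : ↥A) : M) := rfl
      rw [h4, ← hmi3 i, smul_comm]
  -- mapRange mk is zero iff all coords in m
  have hΨWinj : Function.Injective ΨW := by
    apply Function.Injective.comp (g := A.subtype)
    · exact A.injective_subtype
    · apply Function.Injective.comp (g := Wk.subtype)
      · exact Wk.injective_subtype
      · intro u1 u2 h12
        have h13 : bW.repr.symm u1 = bW.repr.symm u2 := by
          rw [Module.Basis.repr_symm_apply, Module.Basis.repr_symm_apply]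
          exact h12
        exact bW.repr.symm.injective h13
  have hΨWW : ∀ u, ΨW u ∈ W := by
    intro u
    have : (Wk.subtype ((Finsupp.linearCombination (R ⧸ m) (fun i => bW i)) u)) ∈ Wk := by
      exact ((Finsupp.linearCombination (R ⧸ m) fun i => bW i) u).2
    exact this
  -- every element of W is x • Φfree v for a suitable v
  have hWsurj : ∀ w ∈ W, ∃ v : ι →₀ R, x • Φfree v = w := by
    intro w hw
    have hwA : w ∈ A := hWA hw
    have hwWA : (⟨w, hwA⟩ : ↥A) ∈ Wk := hw
    set c : ι →₀ (R ⧸ m) := bW.repr ⟨⟨w, hwA⟩, hwWA⟩ with hc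
    set v : ι →₀ R := c.mapRange (qsec m) (qsec_zero m) with hv
    refine ⟨v, ?_⟩
    rw [L1 v]
    have h5 : v.mapRange (Ideal.Quotient.mk m) (map_zero _) = c := by
      ext i
      rw [Finsupp.mapRange_apply, hv, Finsupp.mapRange_apply, qsec_spec]
    rw [h5]
    show ((Wk.subtype (Finsupp.linearCombination _ (fun i => bW i) c) : ↥A) : M) = w
    have h6 : (Finsupp.linearCombination _ (fun i => bW i)) c = ⟨⟨w, hwA⟩, hwWA⟩ := by
      rw [hc, ← Module.Basis.repr_symm_apply, LinearEquiv.symm_apply_apply]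
    rw [h6]
    rfl
  have hΦCA : ∀ u, ΦC u ∈ A := fun u => (ΦCk.restrictScalars R u).2
  have hΦCCk : ∀ u, (ΦCk u) ∈ Ck := fun u =>
    (bC.repr.symm u : ↥Ck).2
  have hΦCinj : Function.Injective ΦC := by
    apply Function.Injective.comp (g := A.subtype)
    · exact A.injective_subtype
    · apply Function.Injective.comp (g := Ck.subtype)
      · exact Ck.injective_subtype
      · exact bC.repr.symm.injective
  have hdisj : Wk ⊓ Ck = ⊥ := disjoint_iff.1 hCk.disjoint
  -- injectivity
  have hinj : Function.Injective Φ := by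
    rw [injective_iff_map_eq_zero]
    rintro ⟨v, u⟩ h0
    have h7 : Φfree v + ΦC u = 0 := by
      rw [← h0]; rfl
    have h8 : x • Φfree v = 0 := by
      have h9 : x • ΦC u = 0 := by
        have := hmemA ⟨ΦC u, hΦCA u⟩
        simpa using this
      have := congrArg (fun z => x • z) h7
      simpa [smul_add, h9] using this
    rw [L1 v] at h8
    have h10 : v.mapRange (Ideal.Quotient.mk m) (map_zero _) = 0 := by
      apply hΨWinj
      rw [h8, map_zero]
    have h11 : ∀ i, v i ∈ m := by
      intro i
      have := congrArg (fun (z : ι →₀ (R ⧸ m)) => z i) h10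
      simp only [Finsupp.mapRange_apply] at this
      exact Ideal.Quotient.eq_zero_iff_mem.1 (by simpa using this)
    set v₂ : ι →₀ R := v.mapRange (xinv x) (xinv_zero x) with hv₂
    have h12 : v = x • v₂ := by
      ext i
      rw [Finsupp.smul_apply, hv₂, Finsupp.mapRange_apply, smul_eq_mul, mul_comm]
      exact (xinv_spec (hspan ▸ h11 i)).symm
    have h13 : Φfree v ∈ W := by
      rw [h12, map_smul, L1 v₂]
      exact hΨWW _
    -- Φfree v lies in both W and (image of) Ck, hence zero
    set au : ↥A := ΦCk.restrictScalars R u with hau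
    have h14 : ΦC u = (au : M) := rfl
    have h15 : au ∈ Ck := hΦCCk u
    have h16 : (au : M) ∈ W := by
      have : (au : M) = - Φfree v := by
        rw [← h14, eq_neg_iff_add_eq_zero, add_comm]
        exact h7
      rw [this]
      exact W.neg_mem h13
    have h17 : au ∈ Wk := h16
    have h18 : au = 0 := by
      have : au ∈ Wk ⊓ Ck := ⟨h17, h15⟩
      rw [hdisj] at this
      simpa using this
    have hu0 : u = 0 := by
      apply hΦCinj
      rw [h14, h18, map_zero]
      rfl
    have hfv0 : Φfree v = 0 := by
      have := h7
      rw [hu0, map_zero, add_zero] at this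
      exact this
    have hv0 : v = 0 := by
      rw [h12, map_smul, L1 v₂] at hfv0
      have h19 : v₂.mapRange (Ideal.Quotient.mk m) (map_zero _) = 0 := by
        apply hΨWinj
        rw [hfv0, map_zero]
      ext i
      have h20 : v₂ i ∈ m := by
        have := congrArg (fun (z : ι →₀ (R ⧸ m)) => z i) h19
        simp only [Finsupp.mapRange_apply] at this
        exact Ideal.Quotient.eq_zero_iff_mem.1 (by simpa using this)
      have h21 : v i = x * v₂ i := by
        rw [h12, Finsupp.smul_apply, smul_eq_mul]
      rw [h21, mul_comm, (hann _).2 h20]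
      rfl
    rw [Prod.mk_eq_zero]
    exact ⟨hv0, hu0⟩
  -- surjectivity
  have hsurj : Function.Surjective Φ := by
    intro mm
    have hxmm : x • mm ∈ W := ⟨mm, rfl⟩
    obtain ⟨v, hv⟩ := hWsurj _ hxmm
    have hdiff : mm - Φfree v ∈ A := by
      show x • (mm - Φfree v) = 0
      rw [smul_sub, hv, sub_self]
    have hdec : (⟨mm - Φfree v, hdiff⟩ : ↥A) ∈ Wk ⊔ Ck := by
      rw [codisjoint_iff.1 hCk.codisjoint]
      trivial
    obtain ⟨w, hw, cc, hcc, hwc⟩ := Submodule.mem_sup.1 hdec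
    obtain ⟨v', hv'⟩ := hWsurj (w : M) hw
    have hwM : (w : M) = Φfree (x • v') := by
      rw [map_smul, hv']
    set uu : τ →₀ (R ⧸ m) := bC.repr ⟨cc, hcc⟩ with huu
    have hccM : ΦC uu = (cc : M) := by
      show ((Ck.subtype (bC.repr.symm (bC.repr ⟨cc, hcc⟩)) : ↥A) : M) = (cc : M)
      rw [LinearEquiv.symm_apply_apply]
      rfl
    refine ⟨⟨v + x • v', uu⟩, ?_⟩
    have hΦapp : Φ (⟨v + x • v', uu⟩) = Φfree (v + x • v') + ΦC uu := rfl
    rw [hΦapp, map_add, ← hwM, hccM]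
    have h22 : (w : M) + (cc : M) = mm - Φfree v := by
      have := congrArg (fun (z : ↥A) => (z : M)) hwc
      simpa using this
    rw [add_assoc, h22]
    abel
  exact ⟨LinearEquiv.ofBijective Φ ⟨hinj, hsurj⟩⟩

lemma ses_of_decomposition (m : Ideal R) {x : R}
    (hspan : Ideal.span {x} = m) (hann : ∀ r : R, r * x = 0 ↔ r ∈ m)
    {M : Type u} [AddCommGroup M] [Module R M] {ι τ : Type u}
    (e : ((ι →₀ R) × (τ →₀ R ⧸ m)) ≃ₗ[R] M) :
    ∃ (P : ModuleCat.{u} R) (f : M →ₗ[R] P) (g : P →ₗ[R] M),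
      Module.Projective R P ∧ Function.Injective f ∧ Function.Surjective g ∧
      LinearMap.range f = LinearMap.ker g := by
  set k := R ⧸ m
  set N1 : Type u := ι →₀ R with hN1
  set N2 : Type u := τ →₀ k with hN2
  set f₁ : N1 →ₗ[R] N1 × N1 := LinearMap.inl R N1 N1 with hf₁
  set g₁ : N1 × N1 →ₗ[R] N1 := LinearMap.snd R N1 N1 with hg₁
  have hrk₁ : LinearMap.range f₁ = LinearMap.ker g₁ := LinearMap.range_inl R N1 N1
  have hf₁_inj : Function.Injective f₁ := LinearMap.inl_injective
  have hg₁_surj : Function.Surjective g₁ := Prod.snd_surjective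
  have hker : m ≤ LinearMap.ker (LinearMap.toSpanSingleton R R x) := by
    intro r hr
    show r • x = 0
    rw [smul_eq_mul]
    exact (hann r).2 hr
  set φx : k →ₗ[R] R := m.liftQ (LinearMap.toSpanSingleton R R x) hker with hφx
  have hφx_apply : ∀ s : R, φx (Ideal.Quotient.mk m s) = s * x := fun s => rfl
  have hφx_inj : Function.Injective φx := by
    rw [← LinearMap.ker_eq_bot, eq_bot_iff]
    rintro c hc
    obtain ⟨s, rfl⟩ := Ideal.Quotient.mk_surjective c
    have h1 : s * x = 0 := hc
    have h2 : s ∈ m := (hann s).1 h1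
    simpa using Ideal.Quotient.eq_zero_iff_mem.2 h2
  set f₂ : N2 →ₗ[R] (τ →₀ R) := Finsupp.mapRange.linearMap φx with hf₂
  set g₂ : (τ →₀ R) →ₗ[R] N2 := Finsupp.mapRange.linearMap m.mkQ with hg₂
  have hf₂_inj : Function.Injective f₂ :=
    Finsupp.mapRange_injective _ (map_zero _) hφx_inj
  have hg₂_surj : Function.Surjective g₂ :=
    Finsupp.mapRange_surjective _ (map_zero _) Ideal.Quotient.mk_surjective
  have hrk₂ : LinearMap.range f₂ = LinearMap.ker g₂ := by
    apply le_antisymm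
    · rintro _ ⟨u, rfl⟩
      show g₂ (f₂ u) = 0
      ext t
      show m.mkQ ((f₂ u) t) = 0
      rw [hf₂, Finsupp.mapRange.linearMap_apply, Finsupp.mapRange_apply]
      obtain ⟨s, hs⟩ := Ideal.Quotient.mk_surjective (u t)
      rw [← hs, hφx_apply]
      refine Ideal.Quotient.eq_zero_iff_mem.2 ?_
      rw [← hspan]
      exact Ideal.mul_mem_left _ _ (Ideal.mem_span_singleton_self x)
    · intro v hv
      have hvm : ∀ t, v t ∈ Ideal.span {x} := by
        intro t
        have := congrArg (fun (z : N2) => z t) (show g₂ v = 0 from hv)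
        simp only [hg₂, Finsupp.mapRange.linearMap_apply, Finsupp.mapRange_apply] at this
        rw [hspan]
        exact Ideal.Quotient.eq_zero_iff_mem.1 this
      set u : N2 := v.mapRange (fun r => Ideal.Quotient.mk m (xinv x r))
        (by simp only [xinv_zero, map_zero]) with hu
      refine ⟨u, ?_⟩
      ext t
      show (f₂ u) t = v t
      rw [hf₂, Finsupp.mapRange.linearMap_apply, Finsupp.mapRange_apply, hu,
        Finsupp.mapRange_apply, hφx_apply]
      exact xinv_spec (hvm t)
  -- assemble
  have hprodinj : ∀ {A B C D : Type u} [AddCommGroup A] [Module R A] [AddCommGroup B] [Module R B]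
      [AddCommGroup C] [Module R C] [AddCommGroup D] [Module R D]
      (f : A →ₗ[R] B) (g : C →ₗ[R] D), Function.Injective f → Function.Injective g →
      Function.Injective (f.prodMap g) := by
    intro A B C D _ _ _ _ _ _ _ _ f g hf hg p q hpq
    rw [Prod.ext_iff] at hpq ⊢
    exact ⟨hf hpq.1, hg hpq.2⟩
  have hprodsurj : ∀ {A B C D : Type u} [AddCommGroup A] [Module R A] [AddCommGroup B] [Module R B]
      [AddCommGroup C] [Module R C] [AddCommGroup D] [Module R D]
      (f : A →ₗ[R] B) (g : C →ₗ[R] D), Function.Surjective f → Function.Surjective g →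
      Function.Surjective (f.prodMap g) := by
    intro A B C D _ _ _ _ _ _ _ _ f g hf hg p
    obtain ⟨a, ha⟩ := hf p.1
    obtain ⟨c, hc⟩ := hg p.2
    exact ⟨(a, c), Prod.ext ha hc⟩
  set F : (N1 × N2) →ₗ[R] ((N1 × N1) × (τ →₀ R)) := f₁.prodMap f₂ with hF
  set G : ((N1 × N1) × (τ →₀ R)) →ₗ[R] (N1 × N2) := g₁.prodMap g₂ with hG
  have hrkF : LinearMap.range F = LinearMap.ker G := by
    rw [hF, hG, range_prodMap', LinearMap.ker_prodMap, hrk₁, hrk₂]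
  haveI hfree : Module.Free R ((N1 × N1) × (τ →₀ R)) := inferInstance
  refine ⟨ModuleCat.of R ((N1 × N1) × (τ →₀ R)), F.comp e.symm.toLinearMap,
    e.toLinearMap.comp G,
    (inferInstance : Module.Projective R ((N1 × N1) × (τ →₀ R))), ?_, ?_, ?_⟩
  · intro a b hab
    exact e.symm.injective (hprodinj f₁ f₂ hf₁_inj hf₂_inj hab)
  · intro mm
    obtain ⟨n, hn⟩ := e.surjective mm
    obtain ⟨p, hp⟩ := hprodsurj g₁ g₂ hg₁_surj hg₂_surj n
    refine ⟨p, ?_⟩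
    show e (G p) = mm
    rw [hp, hn]
  · rw [LinearMap.range_comp, LinearEquiv.range, Submodule.map_top, hrkF]
    ext p
    constructor
    · intro hp
      show e (G p) = 0
      rw [show G p = 0 from hp, map_zero]
    · intro hp
      have h3 : e (G p) = 0 := hp
      exact e.injective (by rw [h3, map_zero])

end LocalRingLemmas

/-- A local commutative ring is SG-semisimple iff it has at most one nonzero proper ideal. -/
theorem local_sgSemisimple_iff_at_most_one_ideal (R : Type u) [CommRing R] [IsLocalRing R] :
    SGSemisimple R ↔
      ∀ I J : Ideal R, I ≠ ⊥ → I ≠ ⊤ → J ≠ ⊥ → J ≠ ⊤ → I = J := by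
  constructor
  · intro hSG I J hI hIt hJ hJt
    obtain ⟨⟨P, f, g, hP, hf, hg, hfg⟩, -⟩ :=
      hSG (ModuleCat.of R (R ⧸ IsLocalRing.maximalIdeal R))
    have key := forward_key (IsLocalRing.maximalIdeal R) P f g hP hf hg hfg
    have hIm : I ≤ IsLocalRing.maximalIdeal R := IsLocalRing.le_maximalIdeal hIt
    have hJm : J ≤ IsLocalRing.maximalIdeal R := IsLocalRing.le_maximalIdeal hJt
    rcases key with h0 | hatom
    · exact absurd (le_bot_iff.1 (h0 ▸ hIm)) hI
    · rw [(hatom.le_iff.1 hIm).resolve_left hI, (hatom.le_iff.1 hJm).resolve_left hJ]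
  · intro h M
    by_cases hm : IsLocalRing.maximalIdeal R = ⊥
    · -- R is a field
      have htri : ∀ I : Ideal R, I = ⊥ ∨ I = ⊤ := by
        intro I
        by_cases ht : I = ⊤
        · right; exact ht
        · left
          exact le_bot_iff.1 (hm ▸ IsLocalRing.le_maximalIdeal ht)
      have hfield : IsField R := by
        refine ⟨exists_pair_ne R, mul_comm, fun {a} ha => ?_⟩
        have hu : IsUnit a := by
          by_contra hnu
          have h1 : a ∈ IsLocalRing.maximalIdeal R :=
            (IsLocalRing.mem_maximalIdeal _).2 (mem_nonunits_iff.2 hnu)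
          rw [hm] at h1
          exact ha (by simpa using h1)
        obtain ⟨b, hb⟩ := hu.exists_right_inv
        exact ⟨b, hb⟩
      letI : Field R := hfield.toField
      constructor
      · haveI : Module.Free R ↥M := Module.Free.of_divisionRing R ↥M
        refine ⟨ModuleCat.of R (↥M × ↥M), LinearMap.inl R ↥M ↥M, LinearMap.snd R ↥M ↥M,
          (inferInstance : Module.Projective R (↥M × ↥M)), LinearMap.inl_injective,
          Prod.snd_surjective, LinearMap.range_inl R ↥M ↥M⟩
      · intro Q _
        exact extVanishes_one_of_injective _ _ (injective_all_of_ideals_bot_top htri Q)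
    · -- the maximal ideal is the unique nonzero proper ideal
      have hmt : IsLocalRing.maximalIdeal R ≠ ⊤ := (IsLocalRing.maximalIdeal.isMaximal R).ne_top
      have htri2 : ∀ I : Ideal R, I ≠ ⊥ → I ≠ ⊤ → I = IsLocalRing.maximalIdeal R :=
        fun I hIb hIt => h I _ hIb hIt hm hmt
      have htri3 : ∀ I : Ideal R, I = ⊥ ∨ I = ⊤ ∨ I = IsLocalRing.maximalIdeal R := by
        intro I
        by_cases h1 : I = ⊥
        · exact Or.inl h1
        · by_cases h2 : I = ⊤
          · exact Or.inr (Or.inl h2)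
          · exact Or.inr (Or.inr (htri2 I h1 h2))
      obtain ⟨x, hx0, hspan, hann⟩ := ring_facts hm htri2
      haveI : (IsLocalRing.maximalIdeal R).IsMaximal := IsLocalRing.maximalIdeal.isMaximal R
      obtain ⟨ι, τ, ⟨e⟩⟩ := decomposition (IsLocalRing.maximalIdeal R) hspan hann ↥M
      constructor
      · exact ses_of_decomposition _ hspan hann e
      · intro Q hQ
        exact extVanishes_one_of_injective _ _
          (injective_of_projective hx0 hspan hann htri3 Q hQ)
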